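/- arXiv:1110.0957 — 2 statements merged into one kernel-verified Lean document; each statement's English description precedes it below -/
import Mathlib

section
/- If the columns of D indexed by the support Λ of a Lasso minimizer α* are linearly independent, then the restriction α*_Λ satisfies the closed-form equation α*_Λ = (D_Λ^T D_Λ)^{-1} (D_Λ^T x − (λ/2) sign(α*_Λ)), where sign is applied coordinatewise. -/
open Finset

noncomputable def normSq {m : ℕ} (x : Fin m → ℝ) : ℝ := ∑ i, (x i) ^ 2
noncomputable def normL1 {k : ℕ} (α : Fin k → ℝ) : ℝ := ∑ j, |α j|

theorem lasso_stationarity {m k : ℕ}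
    (D : Matrix (Fin m) (Fin k) ℝ) (x : Fin m → ℝ) (lam : ℝ)
    (αstar : Fin k → ℝ)
    (hmin : ∀ α : Fin k → ℝ,
      normSq (x - D.mulVec αstar) + lam * normL1 αstar ≤
      normSq (x - D.mulVec α) + lam * normL1 α)
    (j : Fin k) (hj : αstar j ≠ 0) :
    ∑ i, D i j * (x - D.mulVec αstar) i = lam / 2 * Real.sign (αstar j) := by
  set r : Fin m → ℝ := x - D.mulVec αstar with hr
  set S : ℝ := ∑ i, D i j * r i with hS
  set B : ℝ := ∑ i, (D i j) ^ 2 with hB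
  set s : ℝ := Real.sign (αstar j) with hs
  have hBnn : 0 ≤ B := Finset.sum_nonneg fun i _ => sq_nonneg _
  have key : ∀ t : ℝ, |t| < |αstar j| →
      0 ≤ t * (lam * s - 2 * S) + t ^ 2 * B := by
    intro t ht
    set e : Fin k → ℝ := Pi.single j 1 with he
    have h1 : ∀ i, (x - D.mulVec (αstar + t • e)) i = r i - t * D i j := by
      intro i
      have hm : D.mulVec (αstar + t • e) i = D.mulVec αstar i + t * D i j := by
        unfold Matrix.mulVec dotProduct
        simp only [Pi.add_apply, Pi.smul_apply, he, Pi.single_apply, smul_eq_mul,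
          mul_ite, mul_one, mul_zero, mul_add, Finset.sum_add_distrib]
        congr 1
        rw [Finset.sum_ite_eq' Finset.univ j (fun l => D i l * t)]
        simp [mul_comm]
      simp only [Pi.sub_apply, hm, hr]
      ring
    have h2 : normSq (x - D.mulVec (αstar + t • e))
        = normSq r - 2 * t * S + t ^ 2 * B := by
      unfold normSq
      simp only [h1]
      have he2 : ∀ i, (r i - t * D i j) ^ 2
          = r i ^ 2 - 2 * t * (D i j * r i) + t ^ 2 * (D i j) ^ 2 := by
        intro i; ring
      simp_rw [he2]
      rw [Finset.sum_add_distrib, Finset.sum_sub_distrib, ← Finset.mul_sum,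
        ← Finset.mul_sum, ← hS, ← hB]
    have h3 : normL1 (αstar + t • e) = normL1 αstar + s * t := by
      unfold normL1
      have hsplit : ∀ l, |(αstar + t • e) l|
          = |αstar l| + (if l = j then |αstar j + t| - |αstar j| else 0) := by
        intro l
        by_cases h : l = j
        · subst h
          simp [he, Pi.single_apply]
        · simp [he, Pi.single_apply, h]
      simp_rw [hsplit]
      rw [Finset.sum_add_distrib, Finset.sum_ite_eq' Finset.univ j]
      simp only [Finset.mem_univ, if_true]
      have habs : |αstar j + t| = |αstar j| + s * t := by
        obtain ⟨ht1, ht2⟩ := abs_lt.mp ht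
        rcases lt_or_gt_of_ne hj with hneg | hpos
        · rw [hs, Real.sign_of_neg hneg, abs_of_neg hneg,
            abs_of_neg (by rw [abs_of_neg hneg] at ht2; linarith)]
          ring
        · rw [hs, Real.sign_of_pos hpos, abs_of_pos hpos,
            abs_of_pos (by rw [abs_of_pos hpos] at ht1; linarith)]
          ring
      rw [habs]
      ring
    have h4 := hmin (αstar + t • e)
    rw [h2, h3] at h4
    nlinarith [h4]
  set A : ℝ := lam * s - 2 * S with hA
  have hAzero : A = 0 := by
    by_contra hA0
    have habs : 0 < |αstar j| := abs_pos.mpr hj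
    rcases lt_or_gt_of_ne hA0 with hneg | hpos
    · set δ : ℝ := min (|αstar j| / 2) ((-A) / (2 * (B + 1))) with hδ
      have hδpos : 0 < δ := lt_min (by linarith) (div_pos (by linarith) (by linarith))
      have hδ1 : δ ≤ |αstar j| / 2 := min_le_left _ _
      have hδ2 : δ ≤ (-A) / (2 * (B + 1)) := min_le_right _ _
      have hkey := key δ (by rw [abs_of_pos hδpos]; linarith)
      have hδB : δ * B < -A := by
        have h2 : δ * (2 * (B + 1)) ≤ -A := by
          rw [← le_div_iff₀ (by linarith)]; exact hδ2
        nlinarith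
      nlinarith
    · set δ : ℝ := min (|αstar j| / 2) (A / (2 * (B + 1))) with hδ
      have hδpos : 0 < δ := lt_min (by linarith) (div_pos (by linarith) (by linarith))
      have hδ1 : δ ≤ |αstar j| / 2 := min_le_left _ _
      have hδ2 : δ ≤ A / (2 * (B + 1)) := min_le_right _ _
      have hkey := key (-δ) (by rw [abs_neg, abs_of_pos hδpos]; linarith)
      have hδB : δ * B < A := by
        have h2 : δ * (2 * (B + 1)) ≤ A := by
          rw [← le_div_iff₀ (by linarith)]; exact hδ2
        nlinarith
      nlinarith
  rw [hA] at hAzero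
  show S = lam / 2 * s
  linarith

/-- closed form for the Lasso solution on its support.
If the columns of D indexed by the support Λ of a minimizer α* are linearly
independent, then α*_Λ = (D_Λᵀ D_Λ)⁻¹ (D_Λᵀ x − (λ/2) sign(α*_Λ)). -/
theorem lasso_closed_form_on_support {m k : ℕ}
    (D : Matrix (Fin m) (Fin k) ℝ) (x : Fin m → ℝ) (lam : ℝ) (hlam : 0 < lam)
    (αstar : Fin k → ℝ)
    (hmin : ∀ α : Fin k → ℝ,
      normSq (x - D.mulVec αstar) + lam * normL1 αstar ≤
      normSq (x - D.mulVec α) + lam * normL1 α)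
    (Λ : Finset (Fin k)) (hΛ : ∀ j, j ∈ Λ ↔ αstar j ≠ 0)
    (DΛ : Matrix (Fin m) {j // j ∈ Λ} ℝ) (hDΛ : ∀ i j, DΛ i j = D i j.val)
    (hindep : LinearIndependent ℝ (fun j : {j // j ∈ Λ} => fun i => DΛ i j)) :
    (fun j : {j // j ∈ Λ} => αstar j.val) =
      (DΛ.transpose * DΛ)⁻¹.mulVec
        (DΛ.transpose.mulVec x -
          (lam / 2) • (fun j : {j // j ∈ Λ} => Real.sign (αstar j.val))) := by
  classical
  set v : {j // j ∈ Λ} → ℝ := fun j => αstar j.val with hv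
  have hDv : DΛ.mulVec v = D.mulVec αstar := by
    funext i
    unfold Matrix.mulVec dotProduct
    simp only [hDΛ, hv]
    rw [← Finset.sum_subtype Λ (fun _ => Iff.rfl) (fun l => D i l * αstar l)]
    exact Finset.sum_subset (Finset.subset_univ Λ) (fun l _ hl => by
      have : αstar l = 0 := not_not.mp (fun h => hl ((hΛ l).mpr h))
      simp [this])
  have hstat : (DΛ.transpose * DΛ).mulVec v =
      DΛ.transpose.mulVec x -
        (lam / 2) • (fun j : {j // j ∈ Λ} => Real.sign (αstar j.val)) := by
    funext j
    have hj : αstar j.val ≠ 0 := (hΛ j.val).mp j.2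
    have h0 := lasso_stationarity D x lam αstar hmin j.val hj
    have hL : (DΛ.transpose * DΛ).mulVec v j
        = ∑ i, D i j.val * D.mulVec αstar i := by
      rw [← Matrix.mulVec_mulVec, hDv]
      unfold Matrix.mulVec dotProduct
      simp [Matrix.transpose_apply, hDΛ]
    have hR : DΛ.transpose.mulVec x j = ∑ i, D i j.val * x i := by
      unfold Matrix.mulVec dotProduct
      simp [Matrix.transpose_apply, hDΛ]
    have hsum : ∑ i, D i j.val * (x - D.mulVec αstar) i
        = ∑ i, D i j.val * x i - ∑ i, D i j.val * D.mulVec αstar i := by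
      rw [← Finset.sum_sub_distrib]
      refine Finset.sum_congr rfl fun i _ => ?_
      simp [Pi.sub_apply]
      ring
    rw [hsum] at h0
    simp only [Pi.sub_apply, Pi.smul_apply, smul_eq_mul, hL, hR]
    linarith
  have hunit : IsUnit (DΛ.transpose * DΛ) := by
    rw [← Matrix.mulVec_injective_iff_isUnit]
    have hker : ∀ w, (DΛ.transpose * DΛ).mulVec w = 0 → w = 0 := by
      intro w hw
      have h1 : dotProduct (DΛ.mulVec w) (DΛ.mulVec w) = 0 := by
        have h2 := congrArg (fun u => dotProduct w u) hw
        simpa [← Matrix.mulVec_mulVec, Matrix.dotProduct_mulVec,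
          Matrix.vecMul_transpose] using h2
      have hw2 : DΛ.mulVec w = 0 := dotProduct_self_eq_zero.mp h1
      have hsum0 : ∑ l, w l • (fun i => DΛ i l) = (0 : Fin m → ℝ) := by
        funext i
        have h3 := congrFun hw2 i
        simp only [Matrix.mulVec, dotProduct, Pi.zero_apply] at h3
        simp only [Finset.sum_apply, Pi.smul_apply, smul_eq_mul, Pi.zero_apply]
        rw [← h3]
        exact Finset.sum_congr rfl fun l _ => mul_comm _ _
      have hz := Fintype.linearIndependent_iff.mp hindep w hsum0
      funext l; exact hz l
    intro a b hab
    have h4 : (DΛ.transpose * DΛ).mulVec (a - b) = 0 := by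
      rw [Matrix.mulVec_sub, hab, sub_self]
    exact sub_eq_zero.mp (hker _ h4)
  have hdet : IsUnit (DΛ.transpose * DΛ).det :=
    (Matrix.isUnit_iff_isUnit_det _).mp hunit
  rw [← hstat, Matrix.mulVec_mulVec, Matrix.nonsing_inv_mul _ hdet, Matrix.one_mulVec]
end

section
/- If two minimizers α and α' of the Lasso objective ‖x − Dα‖₂² + λ‖α‖₁ exist, then Dα = Dα' and ‖α‖₁ = ‖α'‖₁; i.e., the fitted value and the ℓ₁-norm of the solution are unique even when the minimizer is not. -/
open Finset

lemma normSq_nonneg' {m : ℕ} (z : Fin m → ℝ) : 0 ≤ normSq z :=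
  Finset.sum_nonneg fun _ _ => sq_nonneg _

lemma normSq_eq_zero' {m : ℕ} (z : Fin m → ℝ) (h : normSq z ≤ 0) : z = 0 := by
  have h0 : normSq z = 0 := le_antisymm h (normSq_nonneg' z)
  funext i
  have := (Finset.sum_eq_zero_iff_of_nonneg (fun i _ => sq_nonneg (z i))).mp h0 i
    (Finset.mem_univ i)
  exact pow_eq_zero_iff two_ne_zero |>.mp this

/-- uniqueness of the fitted value and of the ℓ₁ norm of
Lasso minimizers: if α and α' both minimize ‖x − Dα‖² + λ‖α‖₁ then
Dα = Dα' and ‖α‖₁ = ‖α'‖₁. -/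
theorem lasso_fitted_value_unique {m k : ℕ}
    (D : Matrix (Fin m) (Fin k) ℝ) (x : Fin m → ℝ) (lam : ℝ) (hlam : 0 < lam)
    (α α' : Fin k → ℝ)
    (hα : ∀ β : Fin k → ℝ,
      normSq (x - D.mulVec α) + lam * normL1 α ≤
      normSq (x - D.mulVec β) + lam * normL1 β)
    (hα' : ∀ β : Fin k → ℝ,
      normSq (x - D.mulVec α') + lam * normL1 α' ≤
      normSq (x - D.mulVec β) + lam * normL1 β) :
    D.mulVec α = D.mulVec α' ∧ normL1 α = normL1 α' := by
  set u := D.mulVec α with hu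
  set v := D.mulVec α' with hv
  set β : Fin k → ℝ := (1/2 : ℝ) • (α + α') with hβ
  have hmid : D.mulVec β = (1/2 : ℝ) • (u + v) := by
    rw [hβ, Matrix.mulVec_smul, Matrix.mulVec_add]
  have hfeq : normSq (x - u) + lam * normL1 α = normSq (x - v) + lam * normL1 α' :=
    le_antisymm (hα α') (hα' α)
  have hkey : normSq (x - (1/2 : ℝ) • (u + v)) + normSq ((1/2 : ℝ) • (u - v)) =
      (normSq (x - u) + normSq (x - v)) / 2 := by
    simp only [normSq, Pi.sub_apply, Pi.smul_apply, Pi.add_apply, smul_eq_mul]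
    rw [← Finset.sum_add_distrib, ← Finset.sum_add_distrib, Finset.sum_div]
    exact Finset.sum_congr rfl fun i _ => by ring
  have hL1 : normL1 β ≤ (normL1 α + normL1 α') / 2 := by
    simp only [normL1, hβ, Pi.smul_apply, Pi.add_apply, smul_eq_mul]
    rw [← Finset.sum_add_distrib, Finset.sum_div]
    apply Finset.sum_le_sum
    intro j _
    rw [abs_mul, abs_of_pos (by norm_num : (0:ℝ) < 1/2)]
    linarith [abs_add_le (α j) (α' j)]
  have h1 := hα β
  rw [hmid] at h1
  have hL1' : lam * normL1 β ≤ lam * ((normL1 α + normL1 α') / 2) :=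
    mul_le_mul_of_nonneg_left hL1 hlam.le
  have hd : normSq ((1/2 : ℝ) • (u - v)) ≤ 0 := by nlinarith [h1, hkey, hfeq, hL1']
  have hz : (1/2 : ℝ) • (u - v) = 0 := normSq_eq_zero' _ hd
  have huv : u = v := by
    have := (smul_eq_zero.mp hz).resolve_left (by norm_num)
    exact sub_eq_zero.mp this
  refine ⟨huv, ?_⟩
  rw [huv] at hfeq
  have : lam * normL1 α = lam * normL1 α' := by linarith
  exact mul_left_cancel₀ hlam.ne' this
end
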